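/- Assume additionally that t ≠ 0 and t ≠ 1. Then for every integer n ≥ 1 one has ∑_{i=1}^N A_i · x_i^n = (t^{N}/(t^{n}·(t − 1))) · F_n, where F_n is the coefficient of z^n in the power series F(z) = ∏_{i=1}^N (1 − z·x_i)/(1 − t·z·x_i). -/

import Mathlib

open PowerSeries

namespace SumWeightsAux

open Polynomial Finset

variable {F : Type*} [Field F]

lemma reflect_sub' (f g : F[X]) (N : ℕ) :
    reflect N (f - g) = reflect N f - reflect N g := by
  ext i
  simp [coeff_reflect]

lemma reflect_sum' {ι : Type*} (s : Finset ι) (f : ι → F[X]) (N : ℕ) :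
    reflect N (∑ i ∈ s, f i) = ∑ i ∈ s, reflect N (f i) := by
  ext k
  simp [coeff_reflect, Polynomial.finset_sum_coeff]

lemma reflect_one' : reflect 1 (1 : F[X]) = Polynomial.X := by
  rw [← pow_zero (Polynomial.X : F[X]), reflect_monomial, revAt_le (by norm_num), pow_one]

lemma reflect_linear (c : F) : reflect 1 (Polynomial.X - Polynomial.C c) = 1 - Polynomial.C c * Polynomial.X := by
  rw [reflect_sub', ← pow_one (Polynomial.X : F[X]), reflect_monomial, reflect_C,
    revAt_le (le_refl 1), pow_one]
  simp

lemma reflect_prod' {ι : Type*} (s : Finset ι) (c : ι → F) :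
    reflect s.card (∏ j ∈ s, (Polynomial.X - Polynomial.C (c j))) = ∏ j ∈ s, (1 - Polynomial.C (c j) * Polynomial.X) := by
  classical
  induction s using Finset.cons_induction with
  | empty => simp
  | cons a s ha ih =>
    rw [Finset.prod_cons, Finset.prod_cons, Finset.card_cons, add_comm s.card 1,
      reflect_mul _ _ (by simp) ((Polynomial.natDegree_prod_le _ _).trans (by simp)),
      reflect_linear, ih]

lemma reflect_prod'' {ι : Type*} (s : Finset ι) (c : ι → F) {M : ℕ} (h : s.card = M) :
    reflect M (∏ j ∈ s, (Polynomial.X - Polynomial.C (c j))) = ∏ j ∈ s, (1 - Polynomial.C (c j) * Polynomial.X) :=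
  h ▸ reflect_prod' s c

lemma reflect_erase {ι : Type*} (s : Finset ι) (c : ι → F) {M : ℕ} (h : M = 1 + s.card) :
    reflect M (∏ j ∈ s, (Polynomial.X - Polynomial.C (c j)))
      = Polynomial.X * ∏ j ∈ s, (1 - Polynomial.C (c j) * Polynomial.X) := by
  subst h
  rw [← one_mul (∏ j ∈ s, (Polynomial.X - Polynomial.C (c j))),
    reflect_mul _ _ (by simp) ((Polynomial.natDegree_prod_le _ _).trans (by simp)),
    reflect_one', reflect_prod']

lemma geom_inv (a : F) :
    ((1 : F⟦X⟧) - PowerSeries.C (R := F) a * PowerSeries.X)⁻¹ = PowerSeries.mk fun k => a ^ k := by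
  have hc : PowerSeries.constantCoeff (R := F) (1 - PowerSeries.C (R := F) a * PowerSeries.X) ≠ 0 := by simp
  rw [PowerSeries.inv_eq_iff_mul_eq_one hc]
  ext n
  rw [mul_sub, mul_one, map_sub]
  cases n with
  | zero => simp
  | succ m =>
    rw [show (PowerSeries.mk fun k => a ^ k) * (PowerSeries.C (R := F) a * PowerSeries.X)
          = PowerSeries.C (R := F) a * ((PowerSeries.mk fun k => a ^ k) * PowerSeries.X) by ring,
      PowerSeries.coeff_C_mul, PowerSeries.coeff_succ_mul_X, PowerSeries.coeff_mk,
      PowerSeries.coeff_mk, PowerSeries.coeff_one]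
    simp [pow_succ, mul_comm]

/-- The key polynomial identity, obtained by Lagrange interpolation and reflection. -/
lemma key_poly {N : ℕ} (hN : 0 < N) (t : F) (ht0 : t ≠ 0) (x : Fin N → F)
    (hx : Function.Injective x) :
    (∏ j : Fin N, (1 - Polynomial.C (x j) * Polynomial.X))
      = (∏ j : Fin N, (1 - Polynomial.C (t * x j) * Polynomial.X))
        + ∑ i : Fin N, Polynomial.C ((∏ j : Fin N, (t * x i - x j)) *
            (∏ j ∈ Finset.univ.erase i, (t * x i - t * x j))⁻¹) *
            (Polynomial.X * ∏ j ∈ Finset.univ.erase i, (1 - Polynomial.C (t * x j) * Polynomial.X)) := by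
  classical
  set P : F[X] := ∏ j : Fin N, (Polynomial.X - Polynomial.C (x j)) with hP
  set Q : F[X] := ∏ j : Fin N, (Polynomial.X - Polynomial.C (t * x j)) with hQ
  have hmonicP : P.Monic := monic_prod_of_monic _ _ fun j _ => monic_X_sub_C _
  have hmonicQ : Q.Monic := monic_prod_of_monic _ _ fun j _ => monic_X_sub_C _
  have hdeg : ∀ c : Fin N → F, (∏ j : Fin N, (Polynomial.X - Polynomial.C (c j))).degree = (N : WithBot ℕ) := by
    intro c
    rw [degree_prod, Finset.sum_congr rfl fun j _ => degree_X_sub_C (c j)]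
    simp
  have hdegP : P.degree = (N : WithBot ℕ) := by rw [hP]; exact hdeg x
  have hdegQ : Q.degree = (N : WithBot ℕ) := by rw [hQ]; exact hdeg fun j => t * x j
  have hsub : (P - Q).degree < (N : WithBot ℕ) := by
    have := degree_sub_lt (hdegP.trans hdegQ.symm) hmonicP.ne_zero
      (by rw [hmonicP.leadingCoeff, hmonicQ.leadingCoeff])
    rwa [hdegP] at this
  have hvinjOn : Set.InjOn (fun i => t * x i) (Finset.univ : Finset (Fin N)) := by
    intro i _ j _ h
    exact hx (mul_left_cancel₀ ht0 h)
  have hdeglt : (P - Q).degree < ((Finset.univ : Finset (Fin N)).card : ℕ) := by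
    rwa [Finset.card_univ, Fintype.card_fin]
  have h1 := Lagrange.eq_interpolate (v := fun i => t * x i) hvinjOn hdeglt
  rw [Lagrange.interpolate_apply] at h1
  have heval : ∀ i : Fin N, (P - Q).eval (t * x i) = ∏ j : Fin N, (t * x i - x j) := by
    intro i
    have h0 : ∏ j : Fin N, (t * x i - t * x j) = 0 :=
      Finset.prod_eq_zero (Finset.mem_univ i) (sub_self _)
    rw [eval_sub, hP, hQ, eval_prod, eval_prod]
    simp only [eval_sub, eval_X, eval_C]
    rw [h0, sub_zero]
  have h2 : ∀ i : Fin N,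
      Polynomial.C ((P - Q).eval (t * x i)) * Lagrange.basis Finset.univ (fun i => t * x i) i
      = Polynomial.C ((∏ j : Fin N, (t * x i - x j)) *
            (∏ j ∈ Finset.univ.erase i, (t * x i - t * x j))⁻¹) *
          ∏ j ∈ Finset.univ.erase i, (Polynomial.X - Polynomial.C (t * x j)) := by
    intro i
    rw [Lagrange.basis]
    simp only [Lagrange.basisDivisor]
    rw [Finset.prod_mul_distrib, heval i, ← map_prod, ← Finset.prod_inv_distrib,
      ← mul_assoc, ← C_mul]
  rw [Finset.sum_congr rfl (fun i _ => h2 i)] at h1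
  -- h1 : P - Q = ∑ ...
  have hkeyY : P = Q + ∑ i : Fin N,
      Polynomial.C ((∏ j : Fin N, (t * x i - x j)) *
          (∏ j ∈ Finset.univ.erase i, (t * x i - t * x j))⁻¹) *
        ∏ j ∈ Finset.univ.erase i, (Polynomial.X - Polynomial.C (t * x j)) := by
    rw [← h1]; ring
  have hNcard : (Finset.univ : Finset (Fin N)).card = N := by simp
  have hrefl := congrArg (reflect N) hkeyY
  rw [reflect_add, reflect_sum'] at hrefl
  have hrP : reflect N P = ∏ j : Fin N, (1 - Polynomial.C (x j) * Polynomial.X) := by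
    rw [hP]; exact reflect_prod'' _ _ hNcard
  have hrQ : reflect N Q = ∏ j : Fin N, (1 - Polynomial.C (t * x j) * Polynomial.X) := by
    rw [hQ]; exact reflect_prod'' _ _ hNcard
  rw [hrP, hrQ] at hrefl
  rw [hrefl]
  congr 1
  apply Finset.sum_congr rfl
  intro i _
  rw [reflect_C_mul]
  congr 1
  have hc : (Finset.univ.erase i).card = N - 1 := by
    rw [Finset.card_erase_of_mem (Finset.mem_univ i), Finset.card_univ, Fintype.card_fin]
  exact reflect_erase _ _ (by rw [hc]; omega)

/-- The coefficient formula for the power series. -/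
lemma coeff_F {N : ℕ} (hN : 0 < N) (t : F) (ht0 : t ≠ 0) (x : Fin N → F)
    (hx : Function.Injective x) (m : ℕ) :
    PowerSeries.coeff (R := F) (m + 1)
        ((∏ i : Fin N, (1 - PowerSeries.C (R := F) (x i) * PowerSeries.X)) *
          (∏ i : Fin N, (1 - PowerSeries.C (R := F) (t * x i) * PowerSeries.X))⁻¹)
      = ∑ i : Fin N, ((∏ j : Fin N, (t * x i - x j)) *
          (∏ j ∈ Finset.univ.erase i, (t * x i - t * x j))⁻¹) * (t * x i) ^ m := by
  classical
  set D : F⟦X⟧ := ∏ i : Fin N, (1 - PowerSeries.C (R := F) (t * x i) * PowerSeries.X) with hD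
  have hDc : PowerSeries.constantCoeff (R := F) D ≠ 0 := by
    rw [hD, map_prod]
    simp
  have hDinv : D * D⁻¹ = 1 := PowerSeries.mul_inv_cancel _ hDc
  have hkeyPS : (∏ j : Fin N, (1 - PowerSeries.C (R := F) (x j) * PowerSeries.X))
      = D + ∑ i : Fin N, PowerSeries.C (R := F) ((∏ j : Fin N, (t * x i - x j)) *
            (∏ j ∈ Finset.univ.erase i, (t * x i - t * x j))⁻¹) *
            (PowerSeries.X * ∏ j ∈ Finset.univ.erase i,
              (1 - PowerSeries.C (R := F) (t * x j) * PowerSeries.X)) := by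
    have h := congrArg (Polynomial.coeToPowerSeries.ringHom (R := F))
      (key_poly hN t ht0 x hx)
    simp only [map_prod, map_sum, map_sub, map_add, map_mul, map_one] at h
    simp only [Polynomial.coeToPowerSeries.ringHom_apply, Polynomial.coe_C,
      Polynomial.coe_X] at h
    simp only [map_mul, hD]
    convert h using 2 <;> simp [map_mul]
  have hterm : ∀ i : Fin N,
      (∏ j ∈ Finset.univ.erase i, (1 - PowerSeries.C (R := F) (t * x j) * PowerSeries.X)) * D⁻¹
        = PowerSeries.mk fun k => (t * x i) ^ k := by
    intro i
    have hDfac : D = (1 - PowerSeries.C (R := F) (t * x i) * PowerSeries.X) *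
        ∏ j ∈ Finset.univ.erase i, (1 - PowerSeries.C (R := F) (t * x j) * PowerSeries.X) := by
      rw [hD]
      exact (Finset.mul_prod_erase Finset.univ
        (fun j => 1 - PowerSeries.C (R := F) (t * x j) * PowerSeries.X) (Finset.mem_univ i)).symm
    rw [← geom_inv (t * x i), PowerSeries.eq_inv_iff_mul_eq_one (by simp)]
    calc (∏ j ∈ Finset.univ.erase i,
            (1 - PowerSeries.C (R := F) (t * x j) * PowerSeries.X)) * D⁻¹ *
          (1 - PowerSeries.C (R := F) (t * x i) * PowerSeries.X)
        = ((1 - PowerSeries.C (R := F) (t * x i) * PowerSeries.X) *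
            ∏ j ∈ Finset.univ.erase i,
              (1 - PowerSeries.C (R := F) (t * x j) * PowerSeries.X)) * D⁻¹ := by ring
      _ = D * D⁻¹ := by rw [← hDfac]
      _ = 1 := hDinv
  rw [hkeyPS, add_mul, hDinv, Finset.sum_mul]
  have hsummand : ∀ i ∈ (Finset.univ : Finset (Fin N)),
      PowerSeries.C (R := F) ((∏ j : Fin N, (t * x i - x j)) *
          (∏ j ∈ Finset.univ.erase i, (t * x i - t * x j))⁻¹) *
        (PowerSeries.X * ∏ j ∈ Finset.univ.erase i,
          (1 - PowerSeries.C (R := F) (t * x j) * PowerSeries.X)) * D⁻¹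
      = PowerSeries.C (R := F) ((∏ j : Fin N, (t * x i - x j)) *
          (∏ j ∈ Finset.univ.erase i, (t * x i - t * x j))⁻¹) *
        ((PowerSeries.mk fun k => (t * x i) ^ k) * PowerSeries.X) := by
    intro i _
    rw [mul_assoc, mul_assoc, ← hterm i]
    ring
  rw [Finset.sum_congr rfl hsummand, map_add, map_sum]
  have : (PowerSeries.coeff (R := F) (m + 1)) (1 : F⟦X⟧) = 0 := by
    rw [PowerSeries.coeff_one]
    simp
  rw [this, zero_add]
  apply Finset.sum_congr rfl
  intro i _
  rw [PowerSeries.coeff_C_mul, PowerSeries.coeff_succ_mul_X, PowerSeries.coeff_mk]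

end SumWeightsAux

/-- Let `F` be a field, `N` a positive integer, `t ∈ F` with `t ≠ 0` and
`t ≠ 1`, and `x₁, …, x_N` pairwise distinct elements of `F`.  With
`A_i = ∏_{j ≠ i} (t·x_i − x_j)/(x_i − x_j)` and `F_n` the coefficient of `zⁿ` in
`F(z) = ∏_{i=1}^N (1 − z·x_i) · ∏_{i=1}^N (1 − t·z·x_i)⁻¹ ∈ F[[z]]`, one has, for every
`n ≥ 1`:  `∑_{i=1}^N A_i · x_iⁿ = (t^N/(tⁿ·(t − 1))) · F_n`. -/
theorem sum_weights_pow_eq {F : Type*} [Field F] {N : ℕ} (hN : 0 < N)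
    (t : F) (ht0 : t ≠ 0) (ht1 : t ≠ 1) (x : Fin N → F) (hx : Function.Injective x)
    (n : ℕ) (hn : 1 ≤ n) :
    ∑ i : Fin N,
        (∏ j ∈ Finset.univ.erase i, (t * x i - x j) / (x i - x j)) * x i ^ n
      = t ^ N / (t ^ n * (t - 1)) *
          PowerSeries.coeff (R := F) n
            ((∏ i : Fin N, (1 - PowerSeries.C (R := F) (x i) * PowerSeries.X)) *
              (∏ i : Fin N, (1 - PowerSeries.C (R := F) (t * x i) * PowerSeries.X))⁻¹) := by
  classical
  obtain ⟨m, rfl⟩ : ∃ m, n = m + 1 := ⟨n - 1, by omega⟩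
  rw [SumWeightsAux.coeff_F hN t ht0 x hx m, Finset.mul_sum]
  apply Finset.sum_congr rfl
  intro i _
  have hP2 : ∏ j ∈ Finset.univ.erase i, (x i - x j) ≠ 0 := by
    apply Finset.prod_ne_zero_iff.mpr
    intro j hj
    exact sub_ne_zero.mpr fun h => (Finset.ne_of_mem_erase hj) (hx h.symm)
  have hsplit : ∏ j : Fin N, (t * x i - x j)
      = (t - 1) * x i * ∏ j ∈ Finset.univ.erase i, (t * x i - x j) := by
    rw [← Finset.mul_prod_erase _ _ (Finset.mem_univ i)]
    ring
  have hdenom : ∏ j ∈ Finset.univ.erase i, (t * x i - t * x j)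
      = t ^ (Finset.univ.erase i).card * ∏ j ∈ Finset.univ.erase i, (x i - x j) := by
    rw [← Finset.prod_const, ← Finset.prod_mul_distrib]
    apply Finset.prod_congr rfl
    intro j _
    ring
  have hquot : ∏ j ∈ Finset.univ.erase i, ((t * x i - x j) / (x i - x j))
      = (∏ j ∈ Finset.univ.erase i, (t * x i - x j)) /
          (∏ j ∈ Finset.univ.erase i, (x i - x j)) :=
    Finset.prod_div_distrib _ _
  have hc : (Finset.univ.erase i).card = N - 1 := by
    rw [Finset.card_erase_of_mem (Finset.mem_univ i), Finset.card_univ, Fintype.card_fin]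
  have hpow : t ^ N = t ^ (Finset.univ.erase i).card * t := by
    rw [hc, ← pow_succ]
    congr 1
    omega
  have ht1' : t - 1 ≠ 0 := sub_ne_zero.mpr ht1
  have htc : t ^ (Finset.univ.erase i).card ≠ 0 := pow_ne_zero _ ht0
  have htm : t ^ (m + 1) ≠ 0 := pow_ne_zero _ ht0
  rw [hquot, hsplit, hdenom, hpow, mul_pow]
  field_simp
  ring
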